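/- For natural numbers k ≥ 1 and n ≥ 2k, there exists a matrix A ∈ ℝ^{2k×n} such that for all vectors x, z ∈ ℝ^n each having at most k nonzero entries, if |Ax| = |Az| entrywise, then z = x or z = -x. In particular, m = 2k phaseless measurements suffice for unique recovery of every k-sparse real signal up to global sign. -/

import Mathlib

noncomputable section

open Matrix Function

namespace SPR

open scoped Classical

variable {k n : ℕ}

/-- The augmented matrix whose kernel encodes pairs `(x, z)` with
`supp x ⊆ I`, `supp z ⊆ J`, `x_j = 0` for `j ∈ R`, and
`(Bx)_i = (Bz)_i` for `i ∈ S`, `(Bx)_i = -(Bz)_i` for `i ∉ S`. -/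
def Phi {α : Type*} [CommRing α] (B : Matrix (Fin (2*k)) (Fin n) α)
    (S : Finset (Fin (2*k))) (I J R : Finset (Fin n)) :
    Matrix (Fin (2*k) ⊕ (Fin n ⊕ Fin n)) (Fin n ⊕ Fin n) α :=
  Matrix.of fun r c =>
    match r, c with
    | .inl i, .inl j => B i j
    | .inl i, .inr j => if i ∈ S then -B i j else B i j
    | .inr (.inl j'), .inl j => if j' ∉ I ∨ j' ∈ R then (if j = j' then 1 else 0) else 0
    | .inr (.inl _), .inr _ => 0
    | .inr (.inr _), .inl _ => 0
    | .inr (.inr j'), .inr j => if j' ∉ J then (if j = j' then 1 else 0) else 0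

variable {α : Type*} [CommRing α]

lemma phi_mulVec_inl (B : Matrix (Fin (2*k)) (Fin n) α) (S : Finset (Fin (2*k)))
    (I J R : Finset (Fin n)) (v : (Fin n ⊕ Fin n) → α) (i : Fin (2*k)) :
    (Phi B S I J R).mulVec v (.inl i)
      = (B.mulVec (v ∘ Sum.inl)) i + (if i ∈ S then -1 else 1) * (B.mulVec (v ∘ Sum.inr)) i := by
  by_cases hi : i ∈ S <;>
    simp [Phi, mulVec, dotProduct, Fintype.sum_sum_type, hi, Finset.mul_sum, neg_mul,
      Function.comp]

lemma phi_mulVec_inr1 (B : Matrix (Fin (2*k)) (Fin n) α) (S : Finset (Fin (2*k)))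
    (I J R : Finset (Fin n)) (v : (Fin n ⊕ Fin n) → α) (j' : Fin n) :
    (Phi B S I J R).mulVec v (.inr (.inl j'))
      = if j' ∉ I ∨ j' ∈ R then v (.inl j') else 0 := by
  by_cases hc : j' ∉ I ∨ j' ∈ R <;>
    simp [Phi, mulVec, dotProduct, Fintype.sum_sum_type, hc, ite_mul]

lemma phi_mulVec_inr2 (B : Matrix (Fin (2*k)) (Fin n) α) (S : Finset (Fin (2*k)))
    (I J R : Finset (Fin n)) (v : (Fin n ⊕ Fin n) → α) (j' : Fin n) :
    (Phi B S I J R).mulVec v (.inr (.inr j'))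
      = if j' ∉ J then v (.inr j') else 0 := by
  by_cases hc : j' ∉ J <;>
    simp [Phi, mulVec, dotProduct, Fintype.sum_sum_type, hc, ite_mul]

lemma phi_map {β : Type*} [CommRing β] (f : α →+* β) (B : Matrix (Fin (2*k)) (Fin n) α)
    (S : Finset (Fin (2*k))) (I J R : Finset (Fin n)) :
    (Phi B S I J R).map f = Phi (B.map f) S I J R := by
  ext r c
  rcases r with i | j' <;> [skip; rcases j' with j' | j'] <;> rcases c with j | j <;>
    simp [Phi, apply_ite f, _root_.map_one, _root_.map_zero, map_neg]

/-- Over `ℝ`, injectivity of (rectangular) `M` is detected by the Gram determinant. -/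
lemma gram_det_ne_zero_iff {m' n' : Type*} [Fintype m'] [Fintype n'] [DecidableEq n']
    (M : Matrix m' n' ℝ) :
    (Mᵀ * M).det ≠ 0 ↔ Function.Injective M.mulVecLin := by
  rw [← LinearMap.ker_eq_bot, ← Matrix.ker_mulVecLin_transpose_mul_self]
  constructor
  · intro hdet
    rw [Submodule.eq_bot_iff]
    intro v hv
    by_contra hv0
    exact hdet (Matrix.exists_mulVec_eq_zero_iff.mp ⟨v, hv0, hv⟩)
  · intro hker hdet
    obtain ⟨v, hv0, hv⟩ := Matrix.exists_mulVec_eq_zero_iff.mpr hdet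
    rw [Submodule.eq_bot_iff] at hker
    exact hv0 (hker v hv)

/-- A chosen subset of `I ∩ J` of cardinality `min |S| |I ∩ J|`. -/
def P0 (S : Finset (Fin (2*k))) (I J : Finset (Fin n)) : Finset (Fin n) :=
  (Finset.exists_subset_card_eq (min_le_right S.card (I ∩ J).card)).choose

lemma P0_subset (S : Finset (Fin (2*k))) (I J : Finset (Fin n)) : P0 S I J ⊆ I ∩ J :=
  (Finset.exists_subset_card_eq (min_le_right S.card (I ∩ J).card)).choose_spec.1

lemma P0_card (S : Finset (Fin (2*k))) (I J : Finset (Fin n)) :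
    (P0 S I J).card = min S.card (I ∩ J).card :=
  (Finset.exists_subset_card_eq (min_le_right S.card (I ∩ J).card)).choose_spec.2

def Q0 (S : Finset (Fin (2*k))) (I J : Finset (Fin n)) : Finset (Fin n) :=
  (Finset.exists_subset_card_eq (min_le_right Sᶜ.card (I ∩ J).card)).choose

lemma Q0_subset (S : Finset (Fin (2*k))) (I J : Finset (Fin n)) : Q0 S I J ⊆ I ∩ J :=
  (Finset.exists_subset_card_eq (min_le_right Sᶜ.card (I ∩ J).card)).choose_spec.1

lemma Q0_card (S : Finset (Fin (2*k))) (I J : Finset (Fin n)) :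
    (Q0 S I J).card = min Sᶜ.card (I ∩ J).card :=
  (Finset.exists_subset_card_eq (min_le_right Sᶜ.card (I ∩ J).card)).choose_spec.2

/-- The extra coordinates whose vanishing is imposed in `Phi`. -/
def Rc (S : Finset (Fin (2*k))) (I J : Finset (Fin n)) : Finset (Fin n) :=
  ((I ∩ J) \ P0 S I J) ∪ ((I ∩ J) \ Q0 S I J)

lemma Rc_card (S : Finset (Fin (2*k))) (I J : Finset (Fin n)) :
    (Rc S I J).card ≤ ((I ∩ J).card - min S.card (I ∩ J).card)
      + ((I ∩ J).card - min Sᶜ.card (I ∩ J).card) := by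
  refine le_trans (Finset.card_union_le _ _) ?_
  rw [Finset.card_sdiff_of_subset (P0_subset S I J), Finset.card_sdiff_of_subset (Q0_subset S I J),
    P0_card, Q0_card]


/-- Existence of an assignment of rows to coordinates: rows in `S` cover `P`,
rows in `Sᶜ` cover `Q`. -/
lemma sigma_exists (S : Finset (Fin (2*k))) (P Q : Finset (Fin n))
    (hP : P.card ≤ S.card) (hQ : Q.card ≤ Sᶜ.card) :
    ∃ σ : Fin (2*k) → Option (Fin n),
      (∀ j ∈ P, ∃ i ∈ S, σ i = some j) ∧ (∀ j ∈ Q, ∃ i ∈ Sᶜ, σ i = some j) := by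
  refine ⟨fun i =>
    if hi : i ∈ S then
      (if hr : ((S.orderIsoOfFin rfl).symm ⟨i, hi⟩ : ℕ) < P.card then
        some (P.orderIsoOfFin rfl ⟨_, hr⟩) else none)
    else
      (if hr : ((Sᶜ.orderIsoOfFin rfl).symm ⟨i, Finset.mem_compl.mpr hi⟩ : ℕ) < Q.card then
        some (Q.orderIsoOfFin rfl ⟨_, hr⟩) else none), ?_, ?_⟩
  · intro j hj
    set p : Fin P.card := (P.orderIsoOfFin rfl).symm ⟨j, hj⟩ with hp
    set isub := S.orderIsoOfFin rfl ⟨(p : ℕ), lt_of_lt_of_le p.2 hP⟩ with hisub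
    refine ⟨(isub : Fin (2*k)), isub.2, ?_⟩
    beta_reduce
    rw [dif_pos isub.2]
    have h1 : (⟨(isub : Fin (2*k)), isub.2⟩ : {y // y ∈ S}) = isub := Subtype.ext rfl
    rw [h1, hisub, OrderIso.symm_apply_apply]
    have h2 : ((⟨(p : ℕ), lt_of_lt_of_le p.2 hP⟩ : Fin S.card) : ℕ) < P.card := p.2
    rw [dif_pos h2]
    congr 1
    have h3 : (⟨((⟨(p : ℕ), lt_of_lt_of_le p.2 hP⟩ : Fin S.card) : ℕ), h2⟩ : Fin P.card) = p :=
      Fin.ext rfl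
    rw [h3, hp, OrderIso.apply_symm_apply]
  · intro j hj
    set p : Fin Q.card := (Q.orderIsoOfFin rfl).symm ⟨j, hj⟩ with hp
    set isub := Sᶜ.orderIsoOfFin rfl ⟨(p : ℕ), lt_of_lt_of_le p.2 hQ⟩ with hisub
    have hiS : (isub : Fin (2*k)) ∉ S := Finset.mem_compl.mp isub.2
    refine ⟨(isub : Fin (2*k)), isub.2, ?_⟩
    beta_reduce
    rw [dif_neg hiS]
    have h1 : (⟨(isub : Fin (2*k)), Finset.mem_compl.mpr hiS⟩ : {y // y ∈ Sᶜ}) = isub :=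
      Subtype.ext rfl
    rw [h1, hisub, OrderIso.symm_apply_apply]
    have h2 : ((⟨(p : ℕ), lt_of_lt_of_le p.2 hQ⟩ : Fin Sᶜ.card) : ℕ) < Q.card := p.2
    rw [dif_pos h2]
    congr 1
    have h3 : (⟨((⟨(p : ℕ), lt_of_lt_of_le p.2 hQ⟩ : Fin Sᶜ.card) : ℕ), h2⟩ : Fin Q.card) = p :=
      Fin.ext rfl
    rw [h3, hp, OrderIso.apply_symm_apply]


lemma witness_facts (S : Finset (Fin (2*k))) (I J R P Q : Finset (Fin n))
    (hP : P.card ≤ S.card) (hQ : Q.card ≤ Sᶜ.card) :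
    ∃ B : Matrix (Fin (2*k)) (Fin n) ℝ, ∀ v : (Fin n ⊕ Fin n) → ℝ,
      (Phi B S I J R).mulVec v = 0 →
      (∀ j, (j ∉ I ∨ j ∈ R) → v (Sum.inl j) = 0) ∧ (∀ j ∉ J, v (Sum.inr j) = 0) ∧
      (∀ j ∈ P, v (Sum.inl j) = v (Sum.inr j)) ∧
      (∀ j ∈ Q, v (Sum.inl j) = - v (Sum.inr j)) := by
  obtain ⟨σ, hσP, hσQ⟩ := sigma_exists S P Q hP hQ
  refine ⟨Matrix.of fun i j => if σ i = some j then 1 else 0, ?_⟩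
  set B : Matrix (Fin (2*k)) (Fin n) ℝ := Matrix.of fun i j => if σ i = some j then 1 else 0
    with hBdef
  have hBv : ∀ (y : Fin n → ℝ) i j, σ i = some j → B.mulVec y i = y j := by
    intro y i j hij
    simp only [mulVec, dotProduct, hBdef, Matrix.of_apply]
    rw [Finset.sum_eq_single j]
    · simp [hij]
    · intro b _ hb
      rw [hij, if_neg (by simpa using (Ne.symm hb)), zero_mul]
    · intro h; exact absurd (Finset.mem_univ j) h
  intro v hv
  refine ⟨?_, ?_, ?_, ?_⟩
  · intro j hj
    have h0 := congrFun hv (Sum.inr (Sum.inl j))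
    rw [phi_mulVec_inr1, if_pos hj] at h0
    simpa using h0
  · intro j hj
    have h0 := congrFun hv (Sum.inr (Sum.inr j))
    rw [phi_mulVec_inr2, if_pos hj] at h0
    simpa using h0
  · intro j hj
    obtain ⟨i, hiS, hij⟩ := hσP j hj
    have h0 := congrFun hv (Sum.inl i)
    rw [phi_mulVec_inl, hBv _ i j hij, hBv _ i j hij, if_pos hiS] at h0
    simp only [Pi.zero_apply, Function.comp] at h0
    linarith
  · intro j hj
    obtain ⟨i, hiS, hij⟩ := hσQ j hj
    have h0 := congrFun hv (Sum.inl i)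
    rw [phi_mulVec_inl, hBv _ i j hij, hBv _ i j hij,
      if_neg (Finset.mem_compl.mp hiS)] at h0
    simp only [Pi.zero_apply, Function.comp] at h0
    linarith

lemma witness_inj (S : Finset (Fin (2*k))) (I J : Finset (Fin n))
    (hI : I.card ≤ k) (hJ : J.card ≤ k) :
    ∃ B : Matrix (Fin (2*k)) (Fin n) ℝ,
      Function.Injective (Phi B S I J (Rc S I J)).mulVecLin := by
  have hw_le_I : (I ∩ J).card ≤ I.card := Finset.card_le_card Finset.inter_subset_left
  have hw_le_J : (I ∩ J).card ≤ J.card := Finset.card_le_card Finset.inter_subset_right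
  have hwk : (I ∩ J).card ≤ k := le_trans hw_le_I hI
  have hst : S.card + Sᶜ.card = 2*k := by
    rw [Finset.card_add_card_compl]; simp
  have huni : (I ∪ J).card + (I ∩ J).card = I.card + J.card :=
    Finset.card_union_add_card_inter I J
  by_cases htw : Sᶜ.card < (I ∩ J).card
  · -- many S-rows: equalize everything on I ∪ J
    have hPc : (I ∪ J).card ≤ S.card := by omega
    have hQc : (Q0 S I J).card ≤ Sᶜ.card := by rw [Q0_card]; exact min_le_left _ _
    obtain ⟨B, hB⟩ := witness_facts S I J (Rc S I J) (I ∪ J) (Q0 S I J) hPc hQc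
    refine ⟨B, ?_⟩
    rw [← LinearMap.ker_eq_bot, LinearMap.ker_eq_bot']
    intro v hv
    rw [Matrix.mulVecLin_apply] at hv
    obtain ⟨hx0, hz0, hP', hQ'⟩ := hB v hv
    have hX : ∀ j, v (Sum.inl j) = 0 := by
      intro j
      by_cases hjI : j ∈ I
      · by_cases hjJ : j ∈ J
        · have hjIJ : j ∈ I ∩ J := Finset.mem_inter.mpr ⟨hjI, hjJ⟩
          by_cases hjQ : j ∈ Q0 S I J
          · have h1 := hP' j (Finset.mem_union_left _ hjI)
            have h2 := hQ' j hjQ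
            linarith
          · exact hx0 j (Or.inr (Finset.mem_union_right _ (Finset.mem_sdiff.mpr ⟨hjIJ, hjQ⟩)))
        · have h1 := hP' j (Finset.mem_union_left _ hjI)
          rw [hz0 j hjJ] at h1; exact h1
      · exact hx0 j (Or.inl hjI)
    funext c
    simp only [Pi.zero_apply]
    rcases c with j | j
    · exact hX j
    · by_cases hjJ : j ∈ J
      · have h1 := hP' j (Finset.mem_union_right _ hjJ)
        rw [hX j] at h1
        exact h1.symm
      · exact hz0 j hjJ
  · by_cases hsw : S.card < (I ∩ J).card
    · -- many Sᶜ-rows: anti-equalize everything on I ∪ J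
      have hPc : (P0 S I J).card ≤ S.card := by rw [P0_card]; exact min_le_left _ _
      have hQc : (I ∪ J).card ≤ Sᶜ.card := by omega
      obtain ⟨B, hB⟩ := witness_facts S I J (Rc S I J) (P0 S I J) (I ∪ J) hPc hQc
      refine ⟨B, ?_⟩
      rw [← LinearMap.ker_eq_bot, LinearMap.ker_eq_bot']
      intro v hv
      rw [Matrix.mulVecLin_apply] at hv
      obtain ⟨hx0, hz0, hP', hQ'⟩ := hB v hv
      have hX : ∀ j, v (Sum.inl j) = 0 := by
        intro j
        by_cases hjI : j ∈ I
        · by_cases hjJ : j ∈ J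
          · have hjIJ : j ∈ I ∩ J := Finset.mem_inter.mpr ⟨hjI, hjJ⟩
            by_cases hjP : j ∈ P0 S I J
            · have h1 := hP' j hjP
              have h2 := hQ' j (Finset.mem_union_left _ hjI)
              linarith
            · exact hx0 j (Or.inr (Finset.mem_union_left _ (Finset.mem_sdiff.mpr ⟨hjIJ, hjP⟩)))
          · have h1 := hQ' j (Finset.mem_union_left _ hjI)
            rw [hz0 j hjJ] at h1
            simpa using h1
        · exact hx0 j (Or.inl hjI)
      funext c
      simp only [Pi.zero_apply]
      rcases c with j | j
      · exact hX j
      · by_cases hjJ : j ∈ J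
        · have h1 := hQ' j (Finset.mem_union_right _ hjJ)
          rw [hX j] at h1
          linarith
        · exact hz0 j hjJ
    · -- balanced case
      have hΔc : ((I ∪ J) \ (I ∩ J)).card = (I ∪ J).card - (I ∩ J).card :=
        Finset.card_sdiff_of_subset Finset.inter_subset_union
      obtain ⟨DP, hDPsub, hDPcard⟩ :=
        Finset.exists_subset_card_eq (min_le_right (S.card - (I ∩ J).card) ((I ∪ J) \ (I ∩ J)).card)
      have hDQcard : (((I ∪ J) \ (I ∩ J)) \ DP).card = ((I ∪ J) \ (I ∩ J)).card - DP.card :=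
        Finset.card_sdiff_of_subset hDPsub
      have hPc : ((I ∩ J) ∪ DP).card ≤ S.card :=
        le_trans (Finset.card_union_le _ _) (by omega)
      have hQc : ((I ∩ J) ∪ (((I ∪ J) \ (I ∩ J)) \ DP)).card ≤ Sᶜ.card :=
        le_trans (Finset.card_union_le _ _) (by omega)
      obtain ⟨B, hB⟩ := witness_facts S I J (Rc S I J)
        ((I ∩ J) ∪ DP) ((I ∩ J) ∪ (((I ∪ J) \ (I ∩ J)) \ DP)) hPc hQc
      refine ⟨B, ?_⟩
      rw [← LinearMap.ker_eq_bot, LinearMap.ker_eq_bot']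
      intro v hv
      rw [Matrix.mulVecLin_apply] at hv
      obtain ⟨hx0, hz0, hP', hQ'⟩ := hB v hv
      have hrel : ∀ j ∈ I ∪ J, v (Sum.inl j) = v (Sum.inr j) ∨
          v (Sum.inl j) = - v (Sum.inr j) := by
        intro j hj
        by_cases hjIJ : j ∈ I ∩ J
        · exact Or.inl (hP' j (Finset.mem_union_left _ hjIJ))
        · have hjΔ : j ∈ (I ∪ J) \ (I ∩ J) := Finset.mem_sdiff.mpr ⟨hj, hjIJ⟩
          by_cases hjDP : j ∈ DP
          · exact Or.inl (hP' j (Finset.mem_union_right _ hjDP))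
          · exact Or.inr (hQ' j (Finset.mem_union_right _ (Finset.mem_sdiff.mpr ⟨hjΔ, hjDP⟩)))
      have hX : ∀ j, v (Sum.inl j) = 0 := by
        intro j
        by_cases hjI : j ∈ I
        · by_cases hjJ : j ∈ J
          · have hjIJ : j ∈ I ∩ J := Finset.mem_inter.mpr ⟨hjI, hjJ⟩
            have h1 := hP' j (Finset.mem_union_left _ hjIJ)
            have h2 := hQ' j (Finset.mem_union_left _ hjIJ)
            linarith
          · have hz := hz0 j hjJ
            rcases hrel j (Finset.mem_union_left _ hjI) with h | h <;> rw [hz] at h <;>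
              simpa using h
        · exact hx0 j (Or.inl hjI)
      funext c
      simp only [Pi.zero_apply]
      rcases c with j | j
      · exact hX j
      · by_cases hjJ : j ∈ J
        · rcases hrel j (Finset.mem_union_right _ hjJ) with h | h <;> rw [hX j] at h <;>
            linarith
        · exact hz0 j hjJ


open Module in
/-- Core lemma: if the Gram determinant condition holds and `|I ∩ J| ≤ |S|`,
then the measurement equations force `x = z`. -/
lemma core (A : Matrix (Fin (2*k)) (Fin n) ℝ) (S : Finset (Fin (2*k)))
    (I J : Finset (Fin n)) (hI : I.card ≤ k) (hJ : J.card ≤ k)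
    (hw : (I ∩ J).card ≤ S.card)
    (hdet : ((Phi A S I J (Rc S I J))ᵀ * (Phi A S I J (Rc S I J))).det ≠ 0)
    (x z : Fin n → ℝ) (hx : ∀ j ∉ I, x j = 0) (hz : ∀ j ∉ J, z j = 0)
    (h1 : ∀ i ∈ S, A.mulVec x i = A.mulVec z i)
    (h2 : ∀ i ∉ S, A.mulVec x i = - A.mulVec z i) : x = z := by
  have hinj : Function.Injective (Phi A S I J (Rc S I J)).mulVecLin :=
    (gram_det_ne_zero_iff _).mp hdet
  -- the space of all solution pairs (with supports but no R-constraint)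
  set V : Submodule ℝ ((Fin n ⊕ Fin n) → ℝ) :=
    LinearMap.ker (Phi A S I J (∅ : Finset (Fin n))).mulVecLin with hV
  -- the comparison kernel
  set N : Matrix ((↥(Sᶜ)) ⊕ (↥((I ∩ J)ᶜ))) (Fin n) ℝ :=
    Matrix.of fun r j =>
      match r with
      | .inl i => A (i : Fin (2*k)) j
      | .inr j' => if j = (j' : Fin n) then 1 else 0 with hN
  set K : Submodule ℝ (Fin n → ℝ) := LinearMap.ker N.mulVecLin with hK
  have hKmem : ∀ u : Fin n → ℝ, u ∈ K ↔
      ((∀ i ∉ S, A.mulVec u i = 0) ∧ (∀ j ∉ I ∩ J, u j = 0)) := by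
    intro u
    constructor
    · intro hu
      rw [LinearMap.mem_ker] at hu
      constructor
      · intro i hi
        have h0 := congrFun hu (Sum.inl ⟨i, Finset.mem_compl.mpr hi⟩)
        simpa [hN, Matrix.mulVecLin_apply, mulVec, dotProduct] using h0
      · intro j hj
        have h0 := congrFun hu (Sum.inr ⟨j, Finset.mem_compl.mpr hj⟩)
        simpa [hN, Matrix.mulVecLin_apply, mulVec, dotProduct] using h0
    · rintro ⟨hu1, hu2⟩
      rw [LinearMap.mem_ker]
      funext r
      rcases r with i | j'
      · simpa [hN, Matrix.mulVecLin_apply, mulVec, dotProduct] using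
          hu1 (i : Fin (2*k)) (Finset.mem_compl.mp i.2)
      · simpa [hN, Matrix.mulVecLin_apply, mulVec, dotProduct] using
          hu2 (j' : Fin n) (Finset.mem_compl.mp j'.2)
  -- the doubling map
  set ι : (Fin n → ℝ) →ₗ[ℝ] ((Fin n ⊕ Fin n) → ℝ) :=
    { toFun := fun u => Sum.elim u u
      map_add' := by intro u u'; funext c; rcases c with j | j <;> rfl
      map_smul' := by intro a u; funext c; rcases c with j | j <;> rfl } with hι
  have hιinj : Function.Injective ι := by
    intro a b h
    funext j
    exact congrFun h (Sum.inl j)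
  have hKV : K.map ι ≤ V := by
    rintro _ ⟨u, hu, rfl⟩
    obtain ⟨hu1, hu2⟩ := (hKmem u).mp hu
    rw [hV, LinearMap.mem_ker, Matrix.mulVecLin_apply]
    funext r
    rcases r with i | j'
    · rw [phi_mulVec_inl]
      have he1 : (Sum.elim u u) ∘ Sum.inl = u := rfl
      have he2 : (Sum.elim u u) ∘ Sum.inr = u := rfl
      rw [show (ι u : (Fin n ⊕ Fin n) → ℝ) = Sum.elim u u from rfl]
      rw [he1, he2]
      by_cases hi : i ∈ S
      · rw [if_pos hi]; simp only [Pi.zero_apply]; ring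
      · rw [if_neg hi, hu1 i hi]; simp
    · rcases j' with j' | j'
      · rw [phi_mulVec_inr1]
        by_cases hc : j' ∉ I ∨ j' ∈ (∅ : Finset (Fin n))
        · rw [if_pos hc]
          rcases hc with hc | hc
          · have : j' ∉ I ∩ J := fun hh => hc (Finset.mem_inter.mp hh).1
            exact hu2 j' this
          · simp at hc
        · rw [if_neg hc]; simp
      · rw [phi_mulVec_inr2]
        by_cases hc : j' ∉ J
        · rw [if_pos hc]
          have : j' ∉ I ∩ J := fun hh => hc (Finset.mem_inter.mp hh).2
          exact hu2 j' this
        · rw [if_neg hc]; simp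
  -- dimension bounds
  have hdimV : finrank ℝ V ≤ (Rc S I J).card := by
    set π : ((Fin n ⊕ Fin n) → ℝ) →ₗ[ℝ] ((↥(Rc S I J)) → ℝ) :=
      { toFun := fun v ρ => v (Sum.inl (ρ : Fin n))
        map_add' := by intro u u'; rfl
        map_smul' := by intro a u; rfl } with hπ
    have hπV : Function.Injective (π.comp V.subtype) := by
      rw [← LinearMap.ker_eq_bot, LinearMap.ker_eq_bot']
      rintro ⟨v, hv⟩ hπv
      rw [hV, LinearMap.mem_ker, Matrix.mulVecLin_apply] at hv
      have hzero : (Phi A S I J (Rc S I J)).mulVec v = 0 := by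
        funext r
        rcases r with i | j'
        · rw [phi_mulVec_inl]
          have := congrFun hv (Sum.inl i)
          rw [phi_mulVec_inl] at this
          exact this
        · rcases j' with j' | j'
          · rw [phi_mulVec_inr1]
            by_cases hc : j' ∉ I ∨ j' ∈ Rc S I J
            · rw [if_pos hc]
              rcases hc with hc | hc
              · have := congrFun hv (Sum.inr (Sum.inl j'))
                rw [phi_mulVec_inr1, if_pos (Or.inl hc)] at this
                exact this
              · have := congrFun hπv ⟨j', hc⟩
                simpa [hπ] using this
            · rw [if_neg hc]; simp
          · have := congrFun hv (Sum.inr (Sum.inr j'))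
            rw [phi_mulVec_inr2] at this ⊢
            exact this
      have : v = 0 := by
        apply hinj
        rw [Matrix.mulVecLin_apply, hzero]
        simp
      exact Subtype.ext this
    calc finrank ℝ V ≤ finrank ℝ ((↥(Rc S I J)) → ℝ) :=
          LinearMap.finrank_le_finrank_of_injective hπV
      _ = (Rc S I J).card := by
          rw [Module.finrank_fintype_fun_eq_card, Fintype.card_coe]
  have hdimK : (I ∩ J).card ≤ finrank ℝ K + min Sᶜ.card (I ∩ J).card := by
    have hrn := LinearMap.finrank_range_add_finrank_ker N.mulVecLin
    rw [← hK] at hrn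
    have hdom : finrank ℝ (Fin n → ℝ) = n := by
      rw [Module.finrank_fintype_fun_eq_card, Fintype.card_fin]
    have hrange : finrank ℝ (LinearMap.range N.mulVecLin)
        ≤ Sᶜ.card + ((I ∩ J)ᶜ).card := by
      calc finrank ℝ (LinearMap.range N.mulVecLin)
          ≤ finrank ℝ (((↥(Sᶜ)) ⊕ (↥((I ∩ J)ᶜ))) → ℝ) := Submodule.finrank_le _
        _ = Sᶜ.card + ((I ∩ J)ᶜ).card := by
            rw [Module.finrank_fintype_fun_eq_card, Fintype.card_sum,
              Fintype.card_coe, Fintype.card_coe]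
    have hcompl : ((I ∩ J)ᶜ).card = n - (I ∩ J).card := by
      rw [Finset.card_compl, Fintype.card_fin]
    have hwn : (I ∩ J).card ≤ n := by
      calc (I ∩ J).card ≤ Fintype.card (Fin n) := Finset.card_le_univ _
        _ = n := Fintype.card_fin n
    rw [hdom] at hrn
    omega
  have hcardR : (Rc S I J).card ≤ (I ∩ J).card - min Sᶜ.card (I ∩ J).card := by
    have := Rc_card S I J
    omega
  -- conclude V = K.map ι
  have hfmap : finrank ℝ (K.map ι) = finrank ℝ K :=
    (Submodule.equivMapOfInjective ι hιinj K).finrank_eq.symm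
  have hVK : K.map ι = V := by
    apply Submodule.eq_of_le_of_finrank_le hKV
    rw [hfmap]
    omega
  -- membership of our pair
  have hmem : Sum.elim x z ∈ V := by
    rw [hV, LinearMap.mem_ker, Matrix.mulVecLin_apply]
    funext r
    rcases r with i | j'
    · rw [phi_mulVec_inl]
      have he1 : (Sum.elim x z) ∘ Sum.inl = x := rfl
      have he2 : (Sum.elim x z) ∘ Sum.inr = z := rfl
      rw [he1, he2]
      by_cases hi : i ∈ S
      · rw [if_pos hi]
        have := h1 i hi
        simp only [Pi.zero_apply]
        linarith [this]
      · rw [if_neg hi]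
        have := h2 i hi
        simp only [Pi.zero_apply]
        linarith [this]
    · rcases j' with j' | j'
      · rw [phi_mulVec_inr1]
        by_cases hc : j' ∉ I ∨ j' ∈ (∅ : Finset (Fin n))
        · rw [if_pos hc]
          rcases hc with hc | hc
          · simpa using hx j' hc
          · simp at hc
        · rw [if_neg hc]; simp
      · rw [phi_mulVec_inr2]
        by_cases hc : j' ∉ J
        · rw [if_pos hc]
          simpa using hz j' hc
        · rw [if_neg hc]; simp
  rw [← hVK] at hmem
  obtain ⟨u, _, huv⟩ := hmem
  have hxu : x = u := by
    funext j
    exact (congrFun huv (Sum.inl j)).symm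
  have hzu : z = u := by
    funext j
    exact (congrFun huv (Sum.inr j)).symm
  rw [hxu, hzu]


/-- The Gram determinant polynomial of the condition `c = (S, I, J)`. -/
def Xmat (k n : ℕ) : Matrix (Fin (2*k)) (Fin n) (MvPolynomial (Fin (2*k) × Fin n) ℝ) :=
  Matrix.of fun i j => MvPolynomial.X (i, j)

def gpoly (c : Finset (Fin (2*k)) × Finset (Fin n) × Finset (Fin n)) :
    MvPolynomial (Fin (2*k) × Fin n) ℝ :=
  Matrix.det ((Phi (Xmat k n) c.1 c.2.1 c.2.2 (Rc c.1 c.2.1 c.2.2))ᵀ *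
    (Phi (Xmat k n) c.1 c.2.1 c.2.2 (Rc c.1 c.2.1 c.2.2)))

lemma gpoly_eval (c : Finset (Fin (2*k)) × Finset (Fin n) × Finset (Fin n))
    (a : Fin (2*k) × Fin n → ℝ) :
    MvPolynomial.eval a (gpoly c) =
      ((Phi (Matrix.of fun i j => a (i, j)) c.1 c.2.1 c.2.2 (Rc c.1 c.2.1 c.2.2))ᵀ *
        (Phi (Matrix.of fun i j => a (i, j)) c.1 c.2.1 c.2.2 (Rc c.1 c.2.1 c.2.2))).det := by
  rw [gpoly, RingHom.map_det, RingHom.mapMatrix_apply, Matrix.map_mul, Matrix.transpose_map,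
    phi_map]
  have hX : (Xmat k n).map (MvPolynomial.eval a) = Matrix.of fun i j => a (i, j) := by
    ext i j
    simp [Xmat, Matrix.map_apply]
  rw [hX]

end SPR

open SPR in
theorem sparse_phase_retrieval_real_sufficient' (k n : ℕ) :
    ∃ A : Matrix (Fin (2 * k)) (Fin n) ℝ, ∀ x z : Fin n → ℝ,
      (Function.support x).ncard ≤ k →
      (Function.support z).ncard ≤ k →
      (∀ i, |A.mulVec x i| = |A.mulVec z i|) →
      z = x ∨ z = -x := by
  classical
  set C : Finset (Finset (Fin (2*k)) × Finset (Fin n) × Finset (Fin n)) :=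
    Finset.univ.filter fun c => c.2.1.card ≤ k ∧ c.2.2.card ≤ k with hC
  set g : MvPolynomial (Fin (2*k) × Fin n) ℝ := ∏ c ∈ C, gpoly c with hg
  have hgc : ∀ c ∈ C, gpoly c ≠ (0 : MvPolynomial (Fin (2*k) × Fin n) ℝ) := by
    intro c hc
    rw [hC, Finset.mem_filter] at hc
    obtain ⟨B, hB⟩ := witness_inj c.1 c.2.1 c.2.2 hc.2.1 hc.2.2
    have hdet := (gram_det_ne_zero_iff (Phi B c.1 c.2.1 c.2.2 (Rc c.1 c.2.1 c.2.2))).mpr hB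
    intro h0
    have heval := gpoly_eval c (fun p => B p.1 p.2)
    have hBB : (Matrix.of fun i j => (fun p : Fin (2*k) × Fin n => B p.1 p.2) (i, j)) = B :=
      rfl
    rw [h0, map_zero, hBB] at heval
    exact hdet heval.symm
  have hgne : g ≠ 0 := by
    rw [hg]
    exact Finset.prod_ne_zero_iff.mpr hgc
  obtain ⟨a, ha⟩ : ∃ a : Fin (2*k) × Fin n → ℝ, MvPolynomial.eval a g ≠ 0 := by
    by_contra h
    push_neg at h
    exact hgne (MvPolynomial.funext fun v => by rw [h v, map_zero])
  set A : Matrix (Fin (2*k)) (Fin n) ℝ := Matrix.of fun i j => a (i, j) with hA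
  have hdet_all : ∀ c ∈ C,
      ((Phi A c.1 c.2.1 c.2.2 (Rc c.1 c.2.1 c.2.2))ᵀ *
        (Phi A c.1 c.2.1 c.2.2 (Rc c.1 c.2.1 c.2.2))).det ≠ 0 := by
    intro c hc
    have hne : MvPolynomial.eval a (gpoly c) ≠ 0 := by
      intro h0
      apply ha
      rw [hg, map_prod]
      exact Finset.prod_eq_zero hc h0
    rw [gpoly_eval, ← hA] at hne
    exact hne
  refine ⟨A, ?_⟩
  intro x z hxcard hzcard habs
  set I : Finset (Fin n) := Finset.univ.filter (fun j => x j ≠ 0) with hI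
  set J : Finset (Fin n) := Finset.univ.filter (fun j => z j ≠ 0) with hJ
  have hxI : ∀ j ∉ I, x j = 0 := by
    intro j hj
    by_contra h
    exact hj (by simp [hI, h])
  have hzJ : ∀ j ∉ J, z j = 0 := by
    intro j hj
    by_contra h
    exact hj (by simp [hJ, h])
  have hIcard : I.card ≤ k := by
    have hsup : Function.support x = ↑I := by
      ext j
      simp [hI, Function.mem_support]
    rwa [hsup, Set.ncard_coe_finset] at hxcard
  have hJcard : J.card ≤ k := by
    have hsup : Function.support z = ↑J := by
      ext j
      simp [hJ, Function.mem_support]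
    rwa [hsup, Set.ncard_coe_finset] at hzcard
  set S : Finset (Fin (2*k)) := Finset.univ.filter (fun i => A.mulVec x i = A.mulVec z i)
    with hS
  have h1 : ∀ i ∈ S, A.mulVec x i = A.mulVec z i := by
    intro i hi
    simpa [hS] using hi
  have h2 : ∀ i ∉ S, A.mulVec x i = - A.mulVec z i := by
    intro i hi
    have hne : ¬ (A.mulVec x i = A.mulVec z i) := by simpa [hS] using hi
    rcases abs_eq_abs.mp (habs i) with h | h
    · exact absurd h hne
    · exact h
  have hwk : (I ∩ J).card ≤ k :=
    le_trans (Finset.card_le_card Finset.inter_subset_left) hIcard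
  by_cases hws : (I ∩ J).card ≤ S.card
  · left
    have hc : (S, I, J) ∈ C := by simp [hC, hIcard, hJcard]
    exact (core A S I J hIcard hJcard hws (hdet_all (S, I, J) hc) x z hxI hzJ h1 h2).symm
  · right
    have hcompl : S.card + Sᶜ.card = 2*k := by
      rw [Finset.card_add_card_compl]
      simp
    have hSc : (I ∩ J).card ≤ Sᶜ.card := by omega
    have hc : (Sᶜ, I, J) ∈ C := by simp [hC, hIcard, hJcard]
    have hz' : ∀ j ∉ J, (-z) j = 0 := by
      intro j hj
      simp [hzJ j hj]
    have h1' : ∀ i ∈ Sᶜ, A.mulVec x i = A.mulVec (-z) i := by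
      intro i hi
      rw [Matrix.mulVec_neg]
      have := h2 i (Finset.mem_compl.mp hi)
      simpa using this
    have h2' : ∀ i ∉ Sᶜ, A.mulVec x i = - A.mulVec (-z) i := by
      intro i hi
      rw [Matrix.mulVec_neg]
      have hiS : i ∈ S := by simpa using hi
      simpa using h1 i hiS
    have hxz := core A Sᶜ I J hIcard hJcard hSc (hdet_all (Sᶜ, I, J) hc) x (-z) hxI hz' h1' h2'
    rw [hxz]
    simp

/-- For `k ≥ 1` and `n ≥ 2k`, there is a real `2k × n` matrix `A` such that any two
`k`-sparse vectors with the same phaseless measurements `|Ax| = |Az|` agree up to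
global sign: `m = 2k` phaseless measurements suffice. -/
theorem sparse_phase_retrieval_real_sufficient (k n : ℕ) (hk : 1 ≤ k) (hn : 2 * k ≤ n) :
    ∃ A : Matrix (Fin (2 * k)) (Fin n) ℝ, ∀ x z : Fin n → ℝ,
      (Function.support x).ncard ≤ k →
      (Function.support z).ncard ≤ k →
      (∀ i, |A.mulVec x i| = |A.mulVec z i|) →
      z = x ∨ z = -x :=
  sparse_phase_retrieval_real_sufficient' k n
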